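/- Fix a constant C > 0, let a(r) = r/2 − C + 1/r, and let r₁ ≥ 4(C+1). Fix c₁ > 0, set β = √2·c₁, r₂ = r₁ + π/(4β), c₂ = (1/√2)(1 − π/4) − r₁ c₁, and define φ : [r₁,∞) → ℝ by φ(r) = sin(β(r−r₁)) for r₁ ≤ r ≤ r₂ and φ(r) = c₁ r + c₂ for r ≥ r₂. Then a(r) ≥ r/4 + 1 for all r ≥ r₁, and there exists μ > 0 such that φ″(r) − a(r) φ′(r) ≤ −μ φ(r) for every r ∈ (r₁, r₂) ∪ (r₂, ∞). -/

import Mathlib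

open Real Set

/-- The differential inequality (1.243-2): with drift coefficient
`a(r) = r/2 − C + 1/r` and `r₁ ≥ 4(C+1)`, one has `a(r) ≥ r/4 + 1` for `r ≥ r₁`, and
the comparison function `φ` is a supersolution: there exists `μ > 0` with
`φ″ − a φ′ ≤ −μ φ` on `(r₁,r₂) ∪ (r₂,∞)`. -/
theorem comparison_function_supersolution
    (C r₁ c₁ β r₂ c₂ : ℝ) (a φ φ' φ'' : ℝ → ℝ)
    (hC : 0 < C) (hr₁ : 4 * (C + 1) ≤ r₁) (hc₁ : 0 < c₁)
    (hβ : β = Real.sqrt 2 * c₁)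
    (hr₂ : r₂ = r₁ + π / (4 * β))
    (hc₂ : c₂ = (1 / Real.sqrt 2) * (1 - π / 4) - r₁ * c₁)
    (ha : ∀ r, a r = r / 2 - C + 1 / r)
    (hφ : ∀ r, φ r = if r ≤ r₂ then Real.sin (β * (r - r₁)) else c₁ * r + c₂)
    (hφ' : ∀ r, φ' r = if r ≤ r₂ then β * Real.cos (β * (r - r₁)) else c₁)
    (hφ'' : ∀ r, φ'' r = if r ≤ r₂ then -(β ^ 2) * Real.sin (β * (r - r₁)) else 0) :
    (∀ r, r₁ ≤ r → r / 4 + 1 ≤ a r) ∧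
    ∃ μ : ℝ, 0 < μ ∧ ∀ r : ℝ, ((r₁ < r ∧ r < r₂) ∨ r₂ < r) →
      φ'' r - a r * φ' r ≤ -μ * φ r := by
  have h2 : (0:ℝ) < Real.sqrt 2 := Real.sqrt_pos.mpr (by norm_num)
  have hβpos : 0 < β := by rw [hβ]; positivity
  have hr₁pos : 0 < r₁ := by nlinarith
  have hA : ∀ r, r₁ ≤ r → r / 4 + 1 ≤ a r := by
    intro r hr
    have hrpos : 0 < r := lt_of_lt_of_le hr₁pos hr
    rw [ha]
    have h1r : 0 < 1 / r := by positivity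
    nlinarith
  refine ⟨hA, min (min (β ^ 2) (1/4)) (c₁ / (1 + |c₂|)), ?_, ?_⟩
  · have hd : 0 < 1 + |c₂| := by positivity
    exact lt_min (lt_min (by positivity) (by norm_num)) (by positivity)
  intro r hr
  set μ := min (min (β ^ 2) (1/4)) (c₁ / (1 + |c₂|)) with hμdef
  have hμβ : μ ≤ β ^ 2 := le_trans (min_le_left _ _) (min_le_left _ _)
  have hμ4 : μ ≤ 1/4 := le_trans (min_le_left _ _) (min_le_right _ _)
  have hμpos : 0 < μ := by
    have hd : 0 < 1 + |c₂| := by positivity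
    exact lt_min (lt_min (by positivity) (by norm_num)) (by positivity)
  have hμc₂ : μ * c₂ ≤ c₁ := by
    have h1 : μ * c₂ ≤ μ * |c₂| := by
      exact mul_le_mul_of_nonneg_left (le_abs_self c₂) hμpos.le
    have h2' : μ ≤ c₁ / (1 + |c₂|) := min_le_right _ _
    have hd : 0 < 1 + |c₂| := by positivity
    have h3 : μ * (1 + |c₂|) ≤ c₁ := by
      rw [← div_mul_cancel₀ c₁ hd.ne']
      exact mul_le_mul_of_nonneg_right h2' hd.le
    nlinarith [abs_nonneg c₂]
  rcases hr with ⟨hlo, hhi⟩ | hout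
  · -- inner interval
    have hle : r ≤ r₂ := hhi.le
    rw [hφ'' r, hφ' r, hφ r, if_pos hle, if_pos hle, if_pos hle]
    have hx0 : 0 ≤ β * (r - r₁) := by nlinarith
    have hxhi : β * (r - r₁) ≤ π / 4 := by
      have : r - r₁ ≤ π / (4 * β) := by rw [hr₂] at hle; linarith
      calc β * (r - r₁) ≤ β * (π / (4 * β)) :=
            mul_le_mul_of_nonneg_left this hβpos.le
        _ = π / 4 := by field_simp
    have hsin : 0 ≤ Real.sin (β * (r - r₁)) :=
      Real.sin_nonneg_of_nonneg_of_le_pi hx0 (by linarith [Real.pi_pos])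
    have hcos : 0 ≤ Real.cos (β * (r - r₁)) :=
      Real.cos_nonneg_of_mem_Icc ⟨by linarith [Real.pi_pos], by linarith [Real.pi_pos]⟩
    have haa : 0 ≤ a r := by
      have := hA r hlo.le
      nlinarith
    nlinarith [mul_nonneg hsin (sub_nonneg.mpr hμβ),
      mul_nonneg (mul_nonneg haa hβpos.le) hcos]
  · -- outer interval
    have hnle : ¬ r ≤ r₂ := not_le.mpr hout
    rw [hφ'' r, hφ' r, hφ r, if_neg hnle, if_neg hnle, if_neg hnle]
    have hrr₁ : r₁ ≤ r := by
      have : r₁ < r₂ := by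
        rw [hr₂]
        have : 0 < π / (4 * β) := by positivity
        linarith
      linarith
    have haa := hA r hrr₁
    have hrpos : 0 < r := lt_of_lt_of_le hr₁pos hrr₁
    nlinarith [mul_nonneg (mul_nonneg (sub_nonneg.mpr hμ4) hc₁.le) hrpos.le,
      mul_nonneg hc₁.le (sub_nonneg.mpr haa)]
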